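/- For the conservative Duffing oscillator ü + ω₀²u + γu³ = 0, the third-order complex normal form parametrisation is u = z + conj(z) + (γ/(8ω₀²))(z³ + conj(z)³) - (3γ/(4ω₀²))(z²conj(z) + z·conj(z)²) with reduced dynamics ż = iω₀z + i(3γ/(2ω₀))z²conj(z); verify that substituting the mapping and the reduced dynamics into ü + ω₀²u + γu³ produces a remainder containing only monomials of total degree ≥ 5 in z, conj(z). -/

import Mathlib

private lemma deriv_poly5 (c0 c1 c2 c3 c4 c5 z : ℂ) :
    deriv (fun ζ : ℂ => c0 + c1*ζ + c2*ζ^2 + c3*ζ^3 + c4*ζ^4 + c5*ζ^5) z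
      = c1 + 2*c2*z + 3*c3*z^2 + 4*c4*z^3 + 5*c5*z^4 := by
  have h := (((((hasDerivAt_const z c0).add ((hasDerivAt_id z).const_mul c1)).add
      ((hasDerivAt_pow 2 z).const_mul c2)).add ((hasDerivAt_pow 3 z).const_mul c3)).add
      ((hasDerivAt_pow 4 z).const_mul c4)).add ((hasDerivAt_pow 5 z).const_mul c5)
  have hd := h.deriv
  simp only [id_eq] at hd
  rw [show deriv (fun ζ : ℂ => c0 + c1*ζ + c2*ζ^2 + c3*ζ^3 + c4*ζ^4 + c5*ζ^5) z = _ from hd]; push_cast; norm_num; ring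

private noncomputable def duffC (A B C : ℂ) : ℕ → ℕ → ℂ
  | 0, 5 => 3/8*A
  | 5, 0 => 3/8*A
  | 1, 4 => -39/8*A
  | 4, 1 => -39/8*A
  | 2, 3 => -51/8*A
  | 3, 2 => -51/8*A
  | 0, 7 => 3/64*B
  | 7, 0 => 3/64*B
  | 1, 6 => -33/64*B
  | 6, 1 => -33/64*B
  | 2, 5 => -63/32*B
  | 5, 2 => -63/32*B
  | 3, 4 => 201/32*B
  | 4, 3 => 201/32*B
  | 0, 9 => 1/512*C
  | 9, 0 => 1/512*C
  | 1, 8 => -9/256*C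
  | 8, 1 => -9/256*C
  | 2, 7 => 45/256*C
  | 7, 2 => 45/256*C
  | 3, 6 => 3/512*C
  | 6, 3 => 3/512*C
  | 4, 5 => -9/8*C
  | 5, 4 => -9/8*C
  | _, _ => 0

set_option maxHeartbeats 1600000 in
theorem duffing_cnf_third_order_remainder (ω₀ γ : ℝ) (hω : 0 < ω₀) :
    let g : ℂ := Complex.I * (3 * γ / (2 * ω₀))
    let u : ℂ → ℂ → ℂ := fun z w =>
      z + w + ((γ : ℂ) / (8 * ω₀ ^ 2)) * (z ^ 3 + w ^ 3)
        - (3 * (γ : ℂ) / (4 * ω₀ ^ 2)) * (z ^ 2 * w + z * w ^ 2)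
    let D : (ℂ → ℂ → ℂ) → ℂ → ℂ → ℂ := fun F z w =>
      (deriv (fun ζ => F ζ w) z) * (Complex.I * ω₀ * z + g * z ^ 2 * w) +
      (deriv (fun ζ => F z ζ) w) * (-Complex.I * ω₀ * w - g * z * w ^ 2)
    ∃ c : ℕ → ℕ → ℂ, (∀ a b, a + b < 5 → c a b = 0) ∧
      ∀ z w : ℂ,
        D (D u) z w + (ω₀ : ℂ) ^ 2 * u z w + (γ : ℂ) * (u z w) ^ 3 =
          ∑ a ∈ Finset.range 10, ∑ b ∈ Finset.range 10, c a b * z ^ a * w ^ b := by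
  intro g u D
  have hω' : (ω₀ : ℂ) ≠ 0 := by exact_mod_cast hω.ne'
  refine ⟨duffC ((γ:ℂ)^2/(ω₀:ℂ)^2) ((γ:ℂ)^3/(ω₀:ℂ)^4) ((γ:ℂ)^4/(ω₀:ℂ)^6), ?_, ?_⟩
  · intro a b h
    have ha : a < 5 := by omega
    have hb : b < 5 := by omega
    interval_cases a <;> interval_cases b <;> first | rfl | omega
  · -- first derivatives of u
    have du1 : ∀ z w : ℂ, deriv (fun ζ => u ζ w) z
        = (1 - (3*(γ:ℂ)/(4*(ω₀:ℂ)^2))*w^2) + 2*(-(3*(γ:ℂ)/(4*(ω₀:ℂ)^2))*w)*z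
          + 3*((γ:ℂ)/(8*(ω₀:ℂ)^2))*z^2 := by
      intro z w
      have e : (fun ζ => u ζ w) = fun ζ : ℂ =>
          (w + ((γ:ℂ)/(8*(ω₀:ℂ)^2))*w^3) + (1 - (3*(γ:ℂ)/(4*(ω₀:ℂ)^2))*w^2)*ζ
            + (-(3*(γ:ℂ)/(4*(ω₀:ℂ)^2))*w)*ζ^2 + ((γ:ℂ)/(8*(ω₀:ℂ)^2))*ζ^3
            + 0*ζ^4 + 0*ζ^5 := by
        funext ζ; simp only [u]; push_cast; ring
      rw [e, deriv_poly5]; ring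
    have du2 : ∀ z w : ℂ, deriv (fun ζ => u z ζ) w
        = (1 - (3*(γ:ℂ)/(4*(ω₀:ℂ)^2))*z^2) + 2*(-(3*(γ:ℂ)/(4*(ω₀:ℂ)^2))*z)*w
          + 3*((γ:ℂ)/(8*(ω₀:ℂ)^2))*w^2 := by
      intro z w
      have e : (fun ζ => u z ζ) = fun ζ : ℂ =>
          (z + ((γ:ℂ)/(8*(ω₀:ℂ)^2))*z^3) + (1 - (3*(γ:ℂ)/(4*(ω₀:ℂ)^2))*z^2)*ζ
            + (-(3*(γ:ℂ)/(4*(ω₀:ℂ)^2))*z)*ζ^2 + ((γ:ℂ)/(8*(ω₀:ℂ)^2))*ζ^3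
            + 0*ζ^4 + 0*ζ^5 := by
        funext ζ; simp only [u]; push_cast; ring
      rw [e, deriv_poly5]; ring
    -- D u explicitly
    have hDu : ∀ z w : ℂ, D u z w =
        (-1)*Complex.I*(ω₀:ℂ) * w + (-3/8)*Complex.I*(γ:ℂ)/(ω₀:ℂ) * w^3
        + Complex.I*(ω₀:ℂ) * z + (-3/4)*Complex.I*(γ:ℂ)/(ω₀:ℂ) * z * w^2
        + (-9/16)*Complex.I*(γ:ℂ)^2/(ω₀:ℂ)^3 * z * w^4
        + (3/4)*Complex.I*(γ:ℂ)/(ω₀:ℂ) * z^2 * w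
        + (9/8)*Complex.I*(γ:ℂ)^2/(ω₀:ℂ)^3 * z^2 * w^3
        + (3/8)*Complex.I*(γ:ℂ)/(ω₀:ℂ) * z^3
        + (-9/8)*Complex.I*(γ:ℂ)^2/(ω₀:ℂ)^3 * z^3 * w^2
        + (9/16)*Complex.I*(γ:ℂ)^2/(ω₀:ℂ)^3 * z^4 * w := by
      intro z w
      simp only [D, du1, du2, g]
      have h1 : (ω₀:ℂ) * (ω₀:ℂ)⁻¹ = 1 := mul_inv_cancel₀ hω'
      linear_combination ((-3/8)*(γ:ℂ)*(ω₀:ℂ)⁻¹*Complex.I*w^3 + (3/4)*(γ:ℂ)*(ω₀:ℂ)⁻¹*Complex.I*z*w^2 + (-3/4)*(γ:ℂ)*(ω₀:ℂ)⁻¹*Complex.I*z^2*w + (3/8)*(γ:ℂ)*(ω₀:ℂ)⁻¹*Complex.I*z^3) * h1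
    intro z w
    -- derivatives of D u
    have e1 : (fun ζ => D u ζ w) = fun ζ : ℂ =>
        ((-1)*Complex.I*(ω₀:ℂ) * w + (-3/8)*Complex.I*(γ:ℂ)/(ω₀:ℂ) * w^3)
        + (Complex.I*(ω₀:ℂ) + (-3/4)*Complex.I*(γ:ℂ)/(ω₀:ℂ) * w^2
            + (-9/16)*Complex.I*(γ:ℂ)^2/(ω₀:ℂ)^3 * w^4)*ζ
        + ((3/4)*Complex.I*(γ:ℂ)/(ω₀:ℂ) * w
            + (9/8)*Complex.I*(γ:ℂ)^2/(ω₀:ℂ)^3 * w^3)*ζ^2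
        + ((3/8)*Complex.I*(γ:ℂ)/(ω₀:ℂ)
            + (-9/8)*Complex.I*(γ:ℂ)^2/(ω₀:ℂ)^3 * w^2)*ζ^3
        + ((9/16)*Complex.I*(γ:ℂ)^2/(ω₀:ℂ)^3 * w)*ζ^4 + 0*ζ^5 := by
      funext ζ; rw [hDu]; ring
    have e2 : (fun ζ => D u z ζ) = fun ζ : ℂ =>
        (Complex.I*(ω₀:ℂ) * z + (3/8)*Complex.I*(γ:ℂ)/(ω₀:ℂ) * z^3)
        + ((-1)*Complex.I*(ω₀:ℂ) + (3/4)*Complex.I*(γ:ℂ)/(ω₀:ℂ) * z^2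
            + (9/16)*Complex.I*(γ:ℂ)^2/(ω₀:ℂ)^3 * z^4)*ζ
        + ((-3/4)*Complex.I*(γ:ℂ)/(ω₀:ℂ) * z
            + (-9/8)*Complex.I*(γ:ℂ)^2/(ω₀:ℂ)^3 * z^3)*ζ^2
        + ((-3/8)*Complex.I*(γ:ℂ)/(ω₀:ℂ)
            + (9/8)*Complex.I*(γ:ℂ)^2/(ω₀:ℂ)^3 * z^2)*ζ^3
        + ((-9/16)*Complex.I*(γ:ℂ)^2/(ω₀:ℂ)^3 * z)*ζ^4 + 0*ζ^5 := by
      funext ζ; rw [hDu]; ring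
    show (deriv (fun ζ => D u ζ w) z) * (Complex.I * ω₀ * z + g * z ^ 2 * w) +
      (deriv (fun ζ => D u z ζ) w) * (-Complex.I * ω₀ * w - g * z * w ^ 2)
        + (ω₀ : ℂ) ^ 2 * u z w + (γ : ℂ) * (u z w) ^ 3 = _
    rw [e1, e2, deriv_poly5, deriv_poly5]
    simp only [Finset.sum_range_succ, Finset.sum_range_zero]
    norm_num [duffC]
    simp only [u, g]
    have h1 : (ω₀:ℂ) * (ω₀:ℂ)⁻¹ = 1 := mul_inv_cancel₀ hω'
    have h2 : Complex.I * Complex.I = -1 := Complex.I_mul_I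
    linear_combination ((-1)*(γ:ℂ)*w^3 + (-3)*(γ:ℂ)*z*w^2 + (-3)*(γ:ℂ)*z^2*w + (-1)*(γ:ℂ)*z^3 + (1/8)*(γ:ℂ)*(ω₀:ℂ)*(ω₀:ℂ)⁻¹*w^3 + (-3/4)*(γ:ℂ)*(ω₀:ℂ)*(ω₀:ℂ)⁻¹*z*w^2 + (-3/4)*(γ:ℂ)*(ω₀:ℂ)*(ω₀:ℂ)⁻¹*z^2*w + (1/8)*(γ:ℂ)*(ω₀:ℂ)*(ω₀:ℂ)⁻¹*z^3 + (-27/16)*(γ:ℂ)^2*(ω₀:ℂ)⁻¹^2*z*w^4 + (9/8)*(γ:ℂ)^2*(ω₀:ℂ)⁻¹^2*z^2*w^3 + (9/8)*(γ:ℂ)^2*(ω₀:ℂ)⁻¹^2*z^3*w^2 + (-27/16)*(γ:ℂ)^2*(ω₀:ℂ)⁻¹^2*z^4*w) * h1 + ((1)*(ω₀:ℂ)^2*w + (1)*(ω₀:ℂ)^2*z + (9/8)*(γ:ℂ)*(ω₀:ℂ)*(ω₀:ℂ)⁻¹*w^3 + (9/4)*(γ:ℂ)*(ω₀:ℂ)*(ω₀:ℂ)⁻¹*z*w^2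 + (9/4)*(γ:ℂ)*(ω₀:ℂ)*(ω₀:ℂ)⁻¹*z^2*w + (9/8)*(γ:ℂ)*(ω₀:ℂ)*(ω₀:ℂ)⁻¹*z^3 + (27/16)*(γ:ℂ)^2*(ω₀:ℂ)⁻¹^2*z*w^4 + (9/8)*(γ:ℂ)^2*(ω₀:ℂ)⁻¹^2*z^2*w^3 + (9/8)*(γ:ℂ)^2*(ω₀:ℂ)⁻¹^2*z^3*w^2 + (27/16)*(γ:ℂ)^2*(ω₀:ℂ)⁻¹^2*z^4*w + (27/16)*(γ:ℂ)^2*(ω₀:ℂ)*(ω₀:ℂ)⁻¹^3*z*w^4 + (-9/8)*(γ:ℂ)^2*(ω₀:ℂ)*(ω₀:ℂ)⁻¹^3*z^2*w^3 + (-9/8)*(γ:ℂ)^2*(ω₀:ℂ)*(ω₀:ℂ)⁻¹^3*z^3*w^2 + (27/16)*(γ:ℂ)^2*(ω₀:ℂ)*(ω₀:ℂ)⁻¹^3*z^4*w + (81/32)*(γ:ℂ)^3*(ω₀:ℂ)⁻¹^4*z^2*w^5 + (-27/16)*(γ:ℂ)^3*(ω₀:ℂ)⁻¹^4*z^3*w^4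 + (-27/16)*(γ:ℂ)^3*(ω₀:ℂ)⁻¹^4*z^4*w^3 + (81/32)*(γ:ℂ)^3*(ω₀:ℂ)⁻¹^4*z^5*w^2) * h2
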